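/- Let (X,d,m) be a metric measure space and let p,q ∈ (1,∞) satisfy 1/p + 1/q = 1. Let Π be a family of q-test plans on X. Then for every f ∈ W^{1,p}_Π(X), the set G_{Π,p}(f) of (Π,p)-weak upper gradients of f is a convex subset of L^p(m) which is closed under pointwise minimum (if G₁,G₂ ∈ G_{Π,p}(f) then min{G₁,G₂} ∈ G_{Π,p}(f)) and is strongly closed in L^p(m). -/

import Mathlib

open MeasureTheory Filter Set Topology
open scoped NNReal ENNReal unitInterval

noncomputable section

namespace MasterTestPlan

variable {X : Type*} [MetricSpace X]

/-- The extension of a curve `γ : C([0,1], X)` to a function `ℝ → X`, obtained by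
precomposing with the projection of `ℝ` onto `[0,1]`. -/
def curveExt (γ : C(unitInterval, X)) : ℝ → X :=
  fun t => γ (Set.projIcc 0 1 zero_le_one t)

-- The metric speed `|γ̇_t|` of a curve at time `t`: the limit of `d(γ_{t+h}, γ_t)/|h|`
-- as `h → 0` when it exists, and `0` otherwise.
open Classical in
def metricSpeed (γ : C(unitInterval, X)) (t : ℝ) : ℝ :=
  if h : ∃ L : ℝ, Tendsto (fun h : ℝ => dist (curveExt γ (t + h)) (curveExt γ t) / |h|)
      (𝓝[≠] (0:ℝ)) (𝓝 L)
  then h.choose else 0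

/-- A curve `γ ∈ C([0,1],X)` is absolutely continuous provided there exists `g ∈ L¹(0,1)`
with `d(γ_s, γ_t) ≤ ∫_s^t g(r) dr` for all `s ≤ t` in `[0,1]`. -/
def IsACCurve (γ : C(unitInterval, X)) : Prop :=
  ∃ g : ℝ → ℝ, IntegrableOn g (Icc (0:ℝ) 1) ∧
    ∀ s t : ℝ, 0 ≤ s → s ≤ t → t ≤ 1 →
      dist (curveExt γ s) (curveExt γ t) ≤ ∫ r in s..t, g r

/-- `γ ∈ AC^q([0,1],X)`: `γ` is absolutely continuous and its metric speed belongs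
to `L^q(0,1)`. -/
def MemACq (q : ℝ) (γ : C(unitInterval, X)) : Prop :=
  IsACCurve γ ∧ IntegrableOn (fun t => metricSpeed γ t ^ q) (Icc (0:ℝ) 1)

/-- A curve is non-constant. -/
def IsNonconstant (γ : C(unitInterval, X)) : Prop :=
  ∃ s t : unitInterval, γ s ≠ γ t

/-- The slope (local Lipschitz constant) of `f : X → ℝ` at `x`: the limsup of
`|f x - f y| / d(x,y)` as `y → x`, `y ≠ x` (which takes the junk value `0` at
isolated points). -/
def slope' (f : X → ℝ) (x : X) : ℝ :=
  limsup (fun y => |f x - f y| / dist x y) (𝓝[≠] x)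

/-- `f : X → ℝ` is Lipschitz with bounded support. -/
def LipschitzBddSupport (f : X → ℝ) : Prop :=
  (∃ K : ℝ≥0, LipschitzWith K f) ∧ Bornology.IsBounded (Function.support f)

variable [MeasurableSpace X]

/-- `fs n → f` strongly in `L^p(m)`. -/
def TendstoLp (m : Measure X) (p : ℝ) (fs : ℕ → X → ℝ) (f : X → ℝ) : Prop :=
  Tendsto (fun n => eLpNorm (fun x => fs n x - f x) (ENNReal.ofReal p) m) atTop (𝓝 0)

/-- `p` times the Cheeger `p`-energy of `f`: the infimum of `liminf_n ∫ lip(f_n)^p dm`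
over all sequences of Lipschitz functions with bounded support converging to `f`
in `L^p(m)` (with value `∞` if no such sequence exists). -/
def cheegerEnergy (m : Measure X) (p : ℝ) (f : X → ℝ) : ℝ≥0∞ :=
  ⨅ (fs : ℕ → X → ℝ) (_ : (∀ n, LipschitzBddSupport (fs n)) ∧ TendstoLp m p fs f),
    liminf (fun n => ∫⁻ x, ENNReal.ofReal (slope' (fs n) x ^ p) ∂m) atTop

/-- `f` belongs to the Sobolev space `W^{1,p}(X)`. -/
def MemW1p (m : Measure X) (p : ℝ) (f : X → ℝ) : Prop :=
  MemLp f (ENNReal.ofReal p) m ∧ cheegerEnergy m p f < ⊤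

/-- `G` is (a version of) the minimal `p`-relaxed slope `|Df|_p` of `f`: it is a
nonnegative function in `L^p(m)` realising the Cheeger `p`-energy of `f`,
`∫ G^p dm = p E_{Ch,p}(f)`, which is an `L^p(m)`-strong limit of slopes along an
optimal approximating sequence. -/
def IsMinimalRelaxedSlope (m : Measure X) (p : ℝ) (f G : X → ℝ) : Prop :=
  MemLp G (ENNReal.ofReal p) m ∧ (∀ᵐ x ∂m, 0 ≤ G x) ∧
  (∃ fs : ℕ → X → ℝ, (∀ n, LipschitzBddSupport (fs n)) ∧ TendstoLp m p fs f ∧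
    Tendsto (fun n => eLpNorm (fun x => slope' (fs n) x - G x) (ENNReal.ofReal p) m)
      atTop (𝓝 0)) ∧
  ∫⁻ x, ENNReal.ofReal (G x ^ p) ∂m = cheegerEnergy m p f

variable [MeasurableSpace (C(unitInterval, X))]

/-- The kinetic `q`-energy `KE_q(π) = ∫∫₀¹ |γ̇_t|^q dt dπ(γ)` of a plan `π`. -/
def kineticEnergy (q : ℝ) (π : Measure (C(unitInterval, X))) : ℝ≥0∞ :=
  ∫⁻ γ, ∫⁻ t in Icc (0:ℝ) 1, ENNReal.ofReal (metricSpeed γ t ^ q) ∂volume ∂π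

/-- A `q`-test plan on `(X,d,m)`: a Borel probability measure on `C([0,1],X)` with
bounded compression, concentrated on `AC^q([0,1],X)` and with finite kinetic
`q`-energy. -/
structure IsTestPlan (m : Measure X) (q : ℝ) (π : Measure (C(unitInterval, X))) : Prop where
  isProb : IsProbabilityMeasure π
  compression : ∃ C : ℝ≥0, 0 < C ∧ ∀ t : unitInterval, π.map (fun γ => γ t) ≤ C • m
  conc : π {γ | ¬ MemACq q γ} = 0
  energy : kineticEnergy q π < ⊤

/-- An `∞`-test plan: a Borel probability measure on `C([0,1],X)` with bounded
compression which is concentrated on an equi-Lipschitz family of curves. -/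
structure IsInftyTestPlan (m : Measure X) (π : Measure (C(unitInterval, X))) : Prop where
  isProb : IsProbabilityMeasure π
  compression : ∃ C : ℝ≥0, 0 < C ∧ ∀ t : unitInterval, π.map (fun γ => γ t) ≤ C • m
  lip : ∃ L : ℝ≥0, π {γ | ¬ LipschitzWith L (fun t => γ t)} = 0

/-- The compression constant `Comp(π)` of a plan `π`. -/
def compCoeff (m : Measure X) (π : Measure (C(unitInterval, X))) : ℝ≥0∞ :=
  sInf {C : ℝ≥0∞ | ∀ t : unitInterval, π.map (fun γ => γ t) ≤ C • m}

/-- The `q`-energy functional `E_{q,t}(γ) = t (⨍₀^t |γ̇_s|^q ds)^{1/q}`. -/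
def energyQ (q t : ℝ) (γ : C(unitInterval, X)) : ℝ :=
  t * (⨍ s in Ioc (0:ℝ) t, metricSpeed γ s ^ q) ^ (1/q)

/-- `π` `q`-represents the gradient of `f`, whose minimal `p`-relaxed slope is `G`:
`(f∘e_t − f∘e_0)/E_{q,t} → G∘e_0` and `(E_{q,t}/t)^{q/p} → G∘e_0` strongly in
`L^p(π)` as `t ↓ 0`. -/
def RepresentsGradient (p q : ℝ) (π : Measure (C(unitInterval, X))) (f G : X → ℝ) : Prop :=
  Tendsto (fun t : ℝ => eLpNorm
      (fun γ => (f (curveExt γ t) - f (curveExt γ 0)) / energyQ q t γ - G (curveExt γ 0))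
      (ENNReal.ofReal p) π) (𝓝[>] (0:ℝ)) (𝓝 0) ∧
  Tendsto (fun t : ℝ => eLpNorm
      (fun γ => (energyQ q t γ / t) ^ (q / p) - G (curveExt γ 0))
      (ENNReal.ofReal p) π) (𝓝[>] (0:ℝ)) (𝓝 0)

/-- `G` is an upper gradient of `f` along the single curve `γ`: `f ∘ γ ∈ W^{1,1}(0,1)`
(indeed absolutely continuous) with `|(f∘γ)'(t)| ≤ G(γ_t)|γ̇_t|` for a.e. `t`. -/
def UpperGradientAlong (f G : X → ℝ) (γ : C(unitInterval, X)) : Prop :=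
  ∃ h : ℝ → ℝ, IntegrableOn h (Icc (0:ℝ) 1) ∧
    (∀ s t : ℝ, 0 ≤ s → s ≤ t → t ≤ 1 →
      f (curveExt γ t) - f (curveExt γ s) = ∫ r in s..t, h r) ∧
    (∀ᵐ t ∂(volume.restrict (Icc (0:ℝ) 1)), |h t| ≤ G (curveExt γ t) * metricSpeed γ t)

/-- `G` is a weak upper gradient of `f` along the plan `π`. -/
def WUGAlongPlan (f G : X → ℝ) (π : Measure (C(unitInterval, X))) : Prop :=
  ∀ᵐ γ ∂π, UpperGradientAlong f G γ

/-- The set `G_{Π,p}(f)` of `(Π,p)`-weak upper gradients of `f`. -/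
def wugSet (m : Measure X) (p : ℝ) (P : Set (Measure (C(unitInterval, X)))) (f : X → ℝ) :
    Set (X → ℝ) :=
  {G | MemLp G (ENNReal.ofReal p) m ∧ ∀ π ∈ P, WUGAlongPlan f G π}

/-- `f ∈ W^{1,p}_Π(X)`: `f ∈ L^p(m)` admits a `(Π,p)`-weak upper gradient. -/
def MemW1pPlans (m : Measure X) (p : ℝ) (P : Set (Measure (C(unitInterval, X))))
    (f : X → ℝ) : Prop :=
  MemLp f (ENNReal.ofReal p) m ∧ ∃ G, G ∈ wugSet m p P f

/-- `G` is (a version of) the minimal `(Π,p)`-weak upper gradient `|Df|_{Π,p}` of `f`. -/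
def IsMinimalWUG (m : Measure X) (p : ℝ) (P : Set (Measure (C(unitInterval, X))))
    (f G : X → ℝ) : Prop :=
  G ∈ wugSet m p P f ∧ ∀ G' ∈ wugSet m p P f, ∀ᵐ x ∂m, G x ≤ G' x

/-- The `p`-modulus `Mod_p(Γ)` of a family of curves `Γ`. -/
def pModulus (m : Measure X) (p : ℝ) (Γ : Set (C(unitInterval, X))) : ℝ≥0∞ :=
  ⨅ (ρ : X → ℝ≥0∞) (_ : Measurable ρ ∧ ∀ γ ∈ Γ,
      1 ≤ ∫⁻ t in Icc (0:ℝ) 1, ρ (curveExt γ t) * ENNReal.ofReal (metricSpeed γ t)),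
    ∫⁻ x, ρ x ^ p ∂m

/-- `G` is a `p`-weak upper gradient of the Borel function `fbar`: the family of
absolutely continuous curves along which the upper gradient property fails is
`Mod_p`-negligible. -/
def NewtWUG (m : Measure X) (p : ℝ) (fbar G : X → ℝ) : Prop :=
  pModulus m p {γ | IsACCurve γ ∧ ¬ UpperGradientAlong fbar G γ} = 0

/-- `f` belongs to the Newtonian space `N^{1,p}(X)`: `f ∈ L^p(m)` has a Borel
representative admitting a nonnegative `p`-weak upper gradient in `L^p(m)`. -/
def MemNewtonian (m : Measure X) (p : ℝ) (f : X → ℝ) : Prop :=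
  MemLp f (ENNReal.ofReal p) m ∧ ∃ fbar G : X → ℝ, Measurable fbar ∧ fbar =ᵐ[m] f ∧
    MemLp G (ENNReal.ofReal p) m ∧ (∀ x, 0 ≤ G x) ∧ NewtWUG m p fbar G

/-- `G` is (a version of) the minimal `p`-weak upper gradient `G_{f,p}` of `f` in the
Newtonian sense. -/
def IsMinimalNewtonianUG (m : Measure X) (p : ℝ) (f G : X → ℝ) : Prop :=
  MemLp G (ENNReal.ofReal p) m ∧ (∀ x, 0 ≤ G x) ∧
  (∃ fbar, Measurable fbar ∧ fbar =ᵐ[m] f ∧ NewtWUG m p fbar G) ∧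
  (∀ fbar' G' : X → ℝ, Measurable fbar' → fbar' =ᵐ[m] f →
    MemLp G' (ENNReal.ofReal p) m → (∀ x, 0 ≤ G' x) → NewtWUG m p fbar' G' →
    ∀ᵐ x ∂m, G x ≤ G' x)

/-- `π` is a master `q`-test plan (relative to the exponent `p`):
`W^{1,p}(X) ⊆ W^{1,p}_π(X)` and `|Df|_{π,p} = |Df|_p` `m`-a.e. for every
`f ∈ W^{1,p}(X)`. -/
def IsMasterPlan (m : Measure X) (p : ℝ) (π : Measure (C(unitInterval, X))) : Prop :=
  (∀ f : X → ℝ, MemW1p m p f → MemW1pPlans m p {π} f) ∧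
  (∀ f G : X → ℝ, MemW1p m p f → IsMinimalRelaxedSlope m p f G →
    IsMinimalWUG m p {π} f G)

/-- The Sobolev space `W^{1,p}(X)` is separable: there is a countable family of Sobolev
functions approximating every Sobolev function both in `L^p(m)` and in Cheeger energy
of the difference. -/
def W1pSeparable (m : Measure X) (p : ℝ) : Prop :=
  ∃ D : Set (X → ℝ), D.Countable ∧ (∀ g ∈ D, MemW1p m p g) ∧
    ∀ f : X → ℝ, MemW1p m p f → ∀ ε : ℝ, 0 < ε → ∃ g ∈ D,
      eLpNorm (fun x => f x - g x) (ENNReal.ofReal p) m < ENNReal.ofReal ε ∧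
      cheegerEnergy m p (fun x => f x - g x) < ENNReal.ofReal ε

/-- The restriction map `restr_s^t : C([0,1],X) → C([0,1],X)`,
`restr_s^t(γ)_r = γ_{rt+(1-r)s}`. -/
def restrMap (s t : ℝ) (hs : 0 ≤ s) (hst : s ≤ t) (ht : t ≤ 1)
    (γ : C(unitInterval, X)) : C(unitInterval, X) where
  toFun r := γ ⟨(r : ℝ) * t + (1 - (r : ℝ)) * s, by
    refine Set.mem_Icc.mpr ⟨?_, ?_⟩
    · nlinarith [r.2.1, r.2.2, mul_nonneg r.2.1 (hs.trans hst),
        mul_nonneg (sub_nonneg.mpr r.2.2) hs]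
    · nlinarith [r.2.1, r.2.2, mul_le_mul_of_nonneg_left ht r.2.1,
        mul_le_mul_of_nonneg_left (hst.trans ht) (sub_nonneg.mpr r.2.2)]⟩
  continuous_toFun := by
    refine γ.continuous.comp ?_
    refine Continuous.subtype_mk ?_ _
    fun_prop

end MasterTestPlan

namespace MasterTestPlan

variable {X : Type*} [MetricSpace X] [CompleteSpace X] [TopologicalSpace.SeparableSpace X]
  [MeasurableSpace X] [BorelSpace X] [MeasurableSpace (C(unitInterval, X))]
  [BorelSpace (C(unitInterval, X))]


lemma metricSpeed_nonneg {Y : Type*} [MetricSpace Y] (γ : C(unitInterval, Y)) (t : ℝ) :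
    0 ≤ metricSpeed γ t := by
  rw [metricSpeed]
  split_ifs with h
  · exact ge_of_tendsto h.choose_spec
      (Filter.Eventually.of_forall fun s => div_nonneg dist_nonneg (abs_nonneg _))
  · exact le_refl 0

/-- If an integrable function on `[0,1]` has vanishing integral over every subinterval,
it vanishes a.e. -/
lemma aux_ae_zero (h : ℝ → ℝ) (hint : IntegrableOn h (Icc (0:ℝ) 1))
    (hz : ∀ s t : ℝ, 0 ≤ s → s ≤ t → t ≤ 1 → (∫ r in s..t, h r) = 0) :
    ∀ᵐ t ∂(volume.restrict (Icc (0:ℝ) 1)), h t = 0 := by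
  set D : ℝ → ℝ := (Icc (0:ℝ) 1).indicator h with hD
  have hDint : Integrable D volume := hint.integrable_indicator measurableSet_Icc
  have key := IsUnifLocDoublingMeasure.ae_tendsto_average (μ := (volume : Measure ℝ))
    hDint.locallyIntegrable 1
  have hIcc : (volume : Measure ℝ).restrict (Icc (0:ℝ) 1)
      = (volume : Measure ℝ).restrict (Ioo (0:ℝ) 1) :=
    (Measure.restrict_congr_set Ioo_ae_eq_Icc).symm
  rw [hIcc]
  filter_upwards [ae_restrict_mem measurableSet_Ioo, ae_restrict_of_ae key] with x hx hkey
  have h1 : Tendsto (fun j : ℝ => ⨍ y in Metric.closedBall x j, D y) (𝓝[>] (0:ℝ))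
      (𝓝 (D x)) := by
    refine hkey (fun _ => x) id tendsto_id ?_
    filter_upwards [self_mem_nhdsWithin] with δ hδ
    exact Metric.mem_closedBall_self (by simpa using le_of_lt hδ)
  have hpos : 0 < min x (1 - x) := lt_min hx.1 (by linarith [hx.2])
  have h2 : ∀ᶠ j in 𝓝[>] (0:ℝ), (⨍ y in Metric.closedBall x j, D y) = 0 := by
    filter_upwards [Ioo_mem_nhdsGT_of_mem ⟨le_refl (0:ℝ), hpos⟩] with δ hδ
    have hδ0 : 0 < δ := hδ.1
    have hs : 0 ≤ x - δ := by
      have := hδ.2; have := min_le_left x (1 - x); linarith [lt_of_lt_of_le hδ.2 (min_le_left x (1-x))]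
    have ht : x + δ ≤ 1 := by
      have := lt_of_lt_of_le hδ.2 (min_le_right x (1 - x)); linarith
    have hball : Metric.closedBall x δ = Icc (x - δ) (x + δ) := Real.closedBall_eq_Icc
    have hzero : (∫ y in Metric.closedBall x δ, D y) = 0 := by
      rw [hball, setIntegral_indicator measurableSet_Icc]
      have hsub : Icc (x - δ) (x + δ) ∩ Icc (0:ℝ) 1 = Icc (x - δ) (x + δ) := by
        refine inter_eq_left.mpr fun y hy => ⟨by linarith [hy.1], by linarith [hy.2]⟩
      rw [hsub, integral_Icc_eq_integral_Ioc,
        ← intervalIntegral.integral_of_le (by linarith : x - δ ≤ x + δ)]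
      exact hz _ _ hs (by linarith) ht
    rw [setAverage_eq, hzero, smul_zero]
  have hD0 : D x = 0 := tendsto_nhds_unique h1 ((tendsto_congr' h2).mpr tendsto_const_nhds)
  simpa [hD, indicator_of_mem (mem_Icc_of_Ioo hx)] using hD0

/-- Two witnesses of the integral identity along a curve agree a.e. -/
lemma aux_witness_ae_eq {Y : Type*} [MetricSpace Y] {f : Y → ℝ} {γ : C(unitInterval, Y)}
    {h₁ h₂ : ℝ → ℝ}
    (hint₁ : IntegrableOn h₁ (Icc (0:ℝ) 1)) (hint₂ : IntegrableOn h₂ (Icc (0:ℝ) 1))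
    (hid₁ : ∀ s t : ℝ, 0 ≤ s → s ≤ t → t ≤ 1 →
      f (curveExt γ t) - f (curveExt γ s) = ∫ r in s..t, h₁ r)
    (hid₂ : ∀ s t : ℝ, 0 ≤ s → s ≤ t → t ≤ 1 →
      f (curveExt γ t) - f (curveExt γ s) = ∫ r in s..t, h₂ r) :
    ∀ᵐ t ∂(volume.restrict (Icc (0:ℝ) 1)), h₁ t = h₂ t := by
  have key := aux_ae_zero (fun r => h₁ r - h₂ r) (hint₁.sub hint₂) ?_
  · filter_upwards [key] with t ht using sub_eq_zero.mp ht
  · intro s t hs hst ht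
    have hsub : uIcc s t ⊆ Icc (0:ℝ) 1 := by
      rw [uIcc_of_le hst]; exact Icc_subset_Icc hs ht
    rw [intervalIntegral.integral_sub ((hint₁.mono_set hsub).intervalIntegrable)
      ((hint₂.mono_set hsub).intervalIntegrable), ← hid₁ s t hs hst ht, ← hid₂ s t hs hst ht,
      sub_self]

/-- Lemma 1.8: for `f ∈ W^{1,p}_Π(X)`, the set `G_{Π,p}(f)` of `(Π,p)`-weak upper
gradients of `f` is a lattice (closed under `min`), convex, and strongly closed
in `L^p(m)`. -/
theorem statement3 (m : Measure X)
    (hm : ∀ s : Set X, Bornology.IsBounded s → m s < ⊤)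
    (p q : ℝ) (hp : 1 < p) (hq : 1 < q) (hpq : 1/p + 1/q = 1)
    (P : Set (Measure (C(unitInterval, X)))) (hP : ∀ π ∈ P, IsTestPlan m q π)
    (f : X → ℝ) (hf : MemW1pPlans m p P f) :
    (∀ G₁ ∈ wugSet m p P f, ∀ G₂ ∈ wugSet m p P f,
      (fun x => min (G₁ x) (G₂ x)) ∈ wugSet m p P f) ∧
    (∀ G₁ ∈ wugSet m p P f, ∀ G₂ ∈ wugSet m p P f, ∀ a b : ℝ, 0 ≤ a → 0 ≤ b → a + b = 1 →
      (fun x => a * G₁ x + b * G₂ x) ∈ wugSet m p P f) ∧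
    (∀ (Gs : ℕ → X → ℝ) (G : X → ℝ), (∀ n, Gs n ∈ wugSet m p P f) →
      MemLp G (ENNReal.ofReal p) m →
      Tendsto (fun n => eLpNorm (fun x => Gs n x - G x) (ENNReal.ofReal p) m) atTop (𝓝 0) →
      G ∈ wugSet m p P f) := by
  refine ⟨?_, ?_, ?_⟩
  · -- closure under pointwise minimum
    rintro G₁ ⟨hG₁Lp, hG₁⟩ G₂ ⟨hG₂Lp, hG₂⟩
    refine ⟨hG₁Lp.inf hG₂Lp, fun π hπ => ?_⟩
    filter_upwards [hG₁ π hπ, hG₂ π hπ] with γ h1 h2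
    obtain ⟨h₁, hint₁, hid₁, hbd₁⟩ := h1
    obtain ⟨h₂, hint₂, hid₂, hbd₂⟩ := h2
    refine ⟨h₁, hint₁, hid₁, ?_⟩
    filter_upwards [hbd₁, hbd₂, aux_witness_ae_eq hint₁ hint₂ hid₁ hid₂] with t e1 e2 e3
    show |h₁ t| ≤ min (G₁ (curveExt γ t)) (G₂ (curveExt γ t)) * metricSpeed γ t
    rw [min_mul_of_nonneg _ _ (metricSpeed_nonneg γ t)]
    refine le_min e1 ?_
    rw [e3]; exact e2
  · -- convexity
    rintro G₁ ⟨hG₁Lp, hG₁⟩ G₂ ⟨hG₂Lp, hG₂⟩ a b ha hb hab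
    refine ⟨(hG₁Lp.const_mul a).add (hG₂Lp.const_mul b), fun π hπ => ?_⟩
    filter_upwards [hG₁ π hπ, hG₂ π hπ] with γ h1 h2
    obtain ⟨h₁, hint₁, hid₁, hbd₁⟩ := h1
    obtain ⟨h₂, hint₂, hid₂, hbd₂⟩ := h2
    refine ⟨fun r => a * h₁ r + b * h₂ r, (hint₁.const_mul a).add (hint₂.const_mul b),
      ?_, ?_⟩
    · intro s t hs hst ht
      have hsub : uIcc s t ⊆ Icc (0:ℝ) 1 := by
        rw [uIcc_of_le hst]; exact Icc_subset_Icc hs ht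
      have i1 : IntervalIntegrable h₁ volume s t := (hint₁.mono_set hsub).intervalIntegrable
      have i2 : IntervalIntegrable h₂ volume s t := (hint₂.mono_set hsub).intervalIntegrable
      rw [intervalIntegral.integral_add (i1.const_mul a) (i2.const_mul b),
        intervalIntegral.integral_const_mul, intervalIntegral.integral_const_mul,
        ← hid₁ s t hs hst ht, ← hid₂ s t hs hst ht]
      linear_combination (f (curveExt γ s) - f (curveExt γ t)) * hab
    · filter_upwards [hbd₁, hbd₂] with t e1 e2
      refine (abs_add_le _ _).trans ?_
      rw [abs_mul, abs_mul, abs_of_nonneg ha, abs_of_nonneg hb]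
      nlinarith [mul_le_mul_of_nonneg_left e1 ha, mul_le_mul_of_nonneg_left e2 hb]
  · -- strong closedness
    intro Gs G hGs hG hconv
    refine ⟨hG, fun π hπ => ?_⟩
    obtain tp := hP π hπ
    haveI := tp.isProb
    obtain ⟨C, hC0, hC⟩ := tp.compression
    have hp0 : ENNReal.ofReal p ≠ 0 := by
      simp [ENNReal.ofReal_eq_zero]; linarith
    have hmeas : TendstoInMeasure m (fun n => Gs n) atTop G := by
      refine tendstoInMeasure_of_tendsto_eLpNorm hp0
        (fun n => (hGs n).1.aestronglyMeasurable) hG.aestronglyMeasurable ?_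
      simpa [Pi.sub_def] using hconv
    obtain ⟨ns, hns_mono, hae⟩ := hmeas.exists_seq_tendsto_ae
    have hS : m {x | ¬ Tendsto (fun k => Gs (ns k) x) atTop (𝓝 (G x))} = 0 := hae
    obtain ⟨N, hSN, hNmeas, hN0⟩ := exists_measurable_superset_of_null hS
    have heval : Measurable (fun pr : C(unitInterval, X) × ℝ => curveExt pr.1 pr.2) := by
      have h1 : Continuous (fun pr : C(unitInterval, X) × ℝ =>
          ((pr.1, projIcc 0 1 zero_le_one pr.2) : C(unitInterval, X) × unitInterval)) :=
        continuous_fst.prodMk (continuous_projIcc.comp continuous_snd)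
      have hcont : Continuous (fun pr : C(unitInterval, X) × ℝ =>
          pr.1 (projIcc 0 1 zero_le_one pr.2)) := continuous_eval.comp h1
      exact hcont.measurable
    have hA : MeasurableSet {pr : C(unitInterval, X) × ℝ | curveExt pr.1 pr.2 ∈ N} :=
      heval hNmeas
    have hμA : (π.prod (volume.restrict (Icc (0:ℝ) 1)))
        {pr | curveExt pr.1 pr.2 ∈ N} = 0 := by
      rw [Measure.prod_apply_symm hA]
      have hzero : ∀ t : ℝ, π {γ : C(unitInterval, X) | curveExt γ t ∈ N} = 0 := by
        intro t
        have hev : Measurable (fun γ : C(unitInterval, X) =>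
            γ (projIcc 0 1 zero_le_one t)) := (continuous_eval_const _).measurable
        have hpre : {γ : C(unitInterval, X) | curveExt γ t ∈ N}
            = (fun γ : C(unitInterval, X) => γ (projIcc 0 1 zero_le_one t)) ⁻¹' N := rfl
        rw [hpre, ← Measure.map_apply hev hNmeas]
        refine le_antisymm ?_ zero_le
        calc (π.map fun γ : C(unitInterval, X) => γ (projIcc 0 1 zero_le_one t)) N
            ≤ (C • m) N := Measure.le_iff'.mp (hC (projIcc 0 1 zero_le_one t)) N
          _ = 0 := by rw [Measure.smul_apply, hN0, smul_zero]
      have : ∀ t : ℝ, π ((fun γ : C(unitInterval, X) => (γ, t)) ⁻¹'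
          {pr | curveExt pr.1 pr.2 ∈ N}) = 0 := fun t => hzero t
      simp only [this, lintegral_const, zero_mul, lintegral_zero]
    have hconv_ae : ∀ᵐ γ ∂π, ∀ᵐ t ∂(volume.restrict (Icc (0:ℝ) 1)),
        curveExt γ t ∉ N := by
      have := measure_eq_zero_iff_ae_notMem.mp hμA
      exact MeasureTheory.Measure.ae_ae_of_ae_prod this
    have hUG : ∀ᵐ γ ∂π, ∀ k, UpperGradientAlong f (Gs (ns k)) γ :=
      ae_all_iff.mpr fun k => (hGs (ns k)).2 π hπ
    filter_upwards [hconv_ae, hUG] with γ hγN hγUG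
    obtain ⟨h₀, hint₀, hid₀, hbd₀⟩ := hγUG 0
    refine ⟨h₀, hint₀, hid₀, ?_⟩
    have hbd : ∀ k, ∀ᵐ t ∂(volume.restrict (Icc (0:ℝ) 1)),
        |h₀ t| ≤ Gs (ns k) (curveExt γ t) * metricSpeed γ t := by
      intro k
      obtain ⟨hk, hintk, hidk, hbdk⟩ := hγUG k
      filter_upwards [aux_witness_ae_eq hint₀ hintk hid₀ hidk, hbdk] with t ht1 ht2
      rw [ht1]; exact ht2
    filter_upwards [ae_all_iff.mpr hbd, hγN] with t ht hNt
    have hconv_t : Tendsto (fun k => Gs (ns k) (curveExt γ t)) atTop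
        (𝓝 (G (curveExt γ t))) := by
      by_contra hc
      exact hNt (hSN hc)
    exact ge_of_tendsto (hconv_t.mul_const _) (Filter.Eventually.of_forall ht)

end MasterTestPlan
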